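/- Consequently, a pro-p group G with presentation G = ⟨x₁,...,xₙ | x₁^e x₂^e ⋯ xₙ^e = 1⟩ where e = p^k, k ≥ 1, admits no continuous surjective homomorphism onto a free pro-p group of rank m > n/2; i.e. the internal pro-p rank Ir_p(G) satisfies Ir_p(G) ≤ [n/2]. -/

import Mathlib

/-- A pro-`p` group. -/
def IsProP (p : ℕ) (G : Type) [Group G] [TopologicalSpace G]
    [IsTopologicalGroup G] : Prop :=
  CompactSpace G ∧ T2Space G ∧ TotallyDisconnectedSpace G ∧
    ∀ U : Subgroup G, U.Normal → IsOpen (U : Set G) → ∃ k : ℕ, U.index = p ^ k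

/-- `F` is a free pro-`p` group on the family `x`. -/
def IsFreeProPOn (p : ℕ) (F : Type) [Group F] [TopologicalSpace F]
    [IsTopologicalGroup F] {ι : Type} (x : ι → F) : Prop :=
  IsProP p F ∧
    ∀ (H : Type) (_ : Group H) (_ : TopologicalSpace H) (_ : IsTopologicalGroup H),
      IsProP p H → ∀ h : ι → H,
        ∃! φ : F →* H, Continuous φ ∧ ∀ i, φ (x i) = h i



noncomputable section TruncAlg

variable (p m e : ℕ)

abbrev RR := MonoidAlgebra (ZMod p) (FreeMonoid (Fin m))

def coeffL (x : RR p m) (l : List (Fin m)) : ZMod p := x.coeff (FreeMonoid.ofList l)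

lemma coeffL_add (x y : RR p m) (l : List (Fin m)) :
    coeffL p m (x + y) l = coeffL p m x l + coeffL p m y l := Finsupp.add_apply _ _ _

lemma coeffL_sub (x y : RR p m) (l : List (Fin m)) :
    coeffL p m (x - y) l = coeffL p m x l - coeffL p m y l := Finsupp.sub_apply _ _ _

lemma coeffL_zero (l : List (Fin m)) : coeffL p m 0 l = 0 := rfl

lemma coeffL_single (a : FreeMonoid (Fin m)) (c : ZMod p) (l : List (Fin m)) :
    coeffL p m (MonoidAlgebra.single a c) l = if FreeMonoid.toList a = l then c else 0 := by
  classical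
  unfold coeffL
  show (Finsupp.single a c) (FreeMonoid.ofList l) = _
  rw [Finsupp.single_apply]
  by_cases h : FreeMonoid.toList a = l
  · rw [if_pos h, if_pos]
    rw [← h, FreeMonoid.ofList_toList]
  · rw [if_neg h, if_neg]
    intro hh
    exact h (by rw [hh, FreeMonoid.toList_ofList])

lemma coeffL_one (l : List (Fin m)) :
    coeffL p m 1 l = if [] = l then 1 else 0 := by
  rw [MonoidAlgebra.one_def, coeffL_single]
  rfl

open Finset in
lemma coeffL_mul (x y : RR p m) (l : List (Fin m)) :
    coeffL p m (x * y) l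
      = ∑ i ∈ Finset.range (l.length + 1),
          coeffL p m x (l.take i) * coeffL p m y (l.drop i) := by
  classical
  induction x using MonoidAlgebra.induction_linear with
  | zero => simp [coeffL_zero]
  | add f g hf hg =>
      rw [add_mul, coeffL_add, hf, hg, ← Finset.sum_add_distrib]
      exact Finset.sum_congr rfl fun i _ => by rw [coeffL_add, add_mul]
  | single a b =>
      induction y using MonoidAlgebra.induction_linear with
      | zero => simp [coeffL_zero]
      | add f g hf hg =>
          rw [mul_add, coeffL_add, hf, hg, ← Finset.sum_add_distrib]
          exact Finset.sum_congr rfl fun i _ => by rw [coeffL_add, mul_add]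
      | single c d =>
          show coeffL p m ((MonoidAlgebra.single a b : RR p m) * (MonoidAlgebra.single c d : RR p m)) l = _
          rw [MonoidAlgebra.single_mul_single, coeffL_single]
          have hrhs : ∀ i, coeffL p m (MonoidAlgebra.single a b) (l.take i) *
              coeffL p m (MonoidAlgebra.single c d) (l.drop i)
              = (if FreeMonoid.toList a = l.take i then b else 0) *
                (if FreeMonoid.toList c = l.drop i then d else 0) := by
            intro i; rw [coeffL_single, coeffL_single]
          rw [Finset.sum_congr rfl fun i _ => hrhs i]
          have htl : FreeMonoid.toList (a * c) = FreeMonoid.toList a ++ FreeMonoid.toList c :=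
            FreeMonoid.toList_mul a c
      
          by_cases h : FreeMonoid.toList a ++ FreeMonoid.toList c = l
      
          · rw [htl, if_pos h]
            rw [Finset.sum_eq_single (FreeMonoid.toList a).length]
            · rw [← h, List.take_left, List.drop_left, if_pos rfl, if_pos rfl]
            · intro i hi hne
              rw [if_neg, zero_mul]
              intro hta
              apply hne
              have : (l.take i).length = i :=
                (List.length_take : (l.take i).length = min i l.length).trans (min_eq_left (by
                  simpa using Nat.lt_succ_iff.mp (Finset.mem_range.mp hi)))
              rw [← hta] at this
              omega
            · intro hmem
              exfalso
              apply hmem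
              rw [Finset.mem_range]
              have : l.length = (FreeMonoid.toList a).length + (FreeMonoid.toList c).length := by
                rw [← h, List.length_append]
              omega
          · rw [htl, if_neg h]
            symm
            apply Finset.sum_eq_zero
            intro i _
            by_cases h1 : FreeMonoid.toList a = l.take i
            · by_cases h2 : FreeMonoid.toList c = l.drop i
              · exfalso; apply h; rw [h1, h2, List.take_append_drop]
              · rw [if_neg h2, mul_zero]
            · rw [if_neg h1, zero_mul]

def lowRel : RingCon (RR p m) where
  r x y := ∀ l : List (Fin m), l.length ≤ e → coeffL p m x l = coeffL p m y l
  iseqv := ⟨fun _ _ _ => rfl, fun h l hl => (h l hl).symm,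
    fun h1 h2 l hl => (h1 l hl).trans (h2 l hl)⟩
  mul' := by
    intro a b c d hab hcd l hl
    rw [coeffL_mul, coeffL_mul]
    refine Finset.sum_congr rfl fun i hi => ?_
    rw [hab _ (le_trans (by simpa using List.length_take_le i l) hl),
        hcd _ (le_trans ((List.length_drop : (l.drop i).length = l.length - i) ▸ Nat.sub_le _ _) hl)]
  add' := by
    intro a b c d hab hcd l hl
    rw [coeffL_add, coeffL_add, hab l hl, hcd l hl]

def AA := (lowRel p m e).Quotient

instance : Ring (AA p m e) := inferInstanceAs (Ring (lowRel p m e).Quotient)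

def pr : RR p m →+* AA p m e := (lowRel p m e).mk'

lemma pr_surjective : Function.Surjective (pr p m e) :=
  fun a => Quot.inductionOn a (fun x => ⟨x, rfl⟩)

def Acoeff (l : List (Fin m)) (hl : l.length ≤ e) : AA p m e → ZMod p :=
  Quot.lift (fun x => coeffL p m x l) (fun _ _ h => h l hl)

lemma Acoeff_pr (l : List (Fin m)) (hl : l.length ≤ e) (x : RR p m) :
    Acoeff p m e l hl (pr p m e x) = coeffL p m x l := rfl

lemma AA_eq_of_coeff (a b : AA p m e)
    (h : ∀ (l : List (Fin m)) (hl : l.length ≤ e), Acoeff p m e l hl a = Acoeff p m e l hl b) :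
    a = b := by
  obtain ⟨x, rfl⟩ := pr_surjective p m e a
  obtain ⟨y, rfl⟩ := pr_surjective p m e b
  exact Quot.sound (fun l hl => h l hl)

lemma Acoeff_zero (l : List (Fin m)) (hl : l.length ≤ e) :
    Acoeff p m e l hl 0 = 0 := by
  rw [show (0 : AA p m e) = pr p m e 0 from (map_zero _).symm, Acoeff_pr, coeffL_zero]

lemma Acoeff_add (l : List (Fin m)) (hl : l.length ≤ e) (a b : AA p m e) :
    Acoeff p m e l hl (a + b) = Acoeff p m e l hl a + Acoeff p m e l hl b := by
  obtain ⟨x, rfl⟩ := pr_surjective p m e a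
  obtain ⟨y, rfl⟩ := pr_surjective p m e b
  rw [← map_add, Acoeff_pr, Acoeff_pr, Acoeff_pr, coeffL_add]

lemma Acoeff_sub (l : List (Fin m)) (hl : l.length ≤ e) (a b : AA p m e) :
    Acoeff p m e l hl (a - b) = Acoeff p m e l hl a - Acoeff p m e l hl b := by
  obtain ⟨x, rfl⟩ := pr_surjective p m e a
  obtain ⟨y, rfl⟩ := pr_surjective p m e b
  rw [← map_sub, Acoeff_pr, Acoeff_pr, Acoeff_pr, coeffL_sub]

lemma Acoeff_one (l : List (Fin m)) (hl : l.length ≤ e) :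
    Acoeff p m e l hl 1 = if [] = l then 1 else 0 := by
  rw [show (1 : AA p m e) = pr p m e 1 from (map_one _).symm, Acoeff_pr, coeffL_one]

lemma len_take_le (l : List (Fin m)) (hl : l.length ≤ e) (i : ℕ) : (l.take i).length ≤ e := by
  rw [List.length_take]; omega

lemma len_drop_le (l : List (Fin m)) (hl : l.length ≤ e) (i : ℕ) : (l.drop i).length ≤ e :=
  le_trans ((List.length_drop : (l.drop i).length = l.length - i) ▸ Nat.sub_le _ _) hl

lemma Acoeff_mul (l : List (Fin m)) (hl : l.length ≤ e) (a b : AA p m e) :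
    Acoeff p m e l hl (a * b) = ∑ i ∈ Finset.range (l.length + 1),
      Acoeff p m e (l.take i) (len_take_le m e l hl i) a *
      Acoeff p m e (l.drop i) (len_drop_le m e l hl i) b := by
  obtain ⟨x, rfl⟩ := pr_surjective p m e a
  obtain ⟨y, rfl⟩ := pr_surjective p m e b
  rw [← map_mul, Acoeff_pr, coeffL_mul]
  rfl

/-- `a` has all coefficients of degree `< d` (among those of degree `≤ e`) vanishing. -/
def Deg (d : ℕ) (a : AA p m e) : Prop :=
  ∀ (l : List (Fin m)) (hl : l.length ≤ e), l.length < d → Acoeff p m e l hl a = 0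

lemma Deg_zero (d : ℕ) : Deg p m e d 0 := fun l hl _ => Acoeff_zero p m e l hl

lemma Deg_mono {d d' : ℕ} (h : d' ≤ d) {a : AA p m e} (ha : Deg p m e d a) :
    Deg p m e d' a := fun l hl hlen => ha l hl (lt_of_lt_of_le hlen h)

lemma Deg_add {d : ℕ} {a b : AA p m e} (ha : Deg p m e d a) (hb : Deg p m e d b) :
    Deg p m e d (a + b) := fun l hl hlen => by
  rw [Acoeff_add, ha l hl hlen, hb l hl hlen, add_zero]

lemma Deg_mul {d₁ d₂ : ℕ} {a b : AA p m e} (ha : Deg p m e d₁ a) (hb : Deg p m e d₂ b) :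
    Deg p m e (d₁ + d₂) (a * b) := by
  intro l hl hlen
  rw [Acoeff_mul]
  apply Finset.sum_eq_zero
  intro i hi
  rw [Finset.mem_range] at hi
  by_cases h : i < d₁
  · rw [ha (l.take i) _ (by rw [List.length_take]; omega), zero_mul]
  · rw [hb (l.drop i) _ (by rw [List.length_drop]; omega), mul_zero]

lemma Deg_pow {a : AA p m e} (ha : Deg p m e 1 a) (N : ℕ) : Deg p m e N (a ^ N) := by
  induction N with
  | zero => exact fun l hl hlen => absurd hlen (by omega)
  | succ N ih =>
      rw [pow_succ]
      exact Deg_mul p m e ih ha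

lemma Deg_listSum {d : ℕ} (L : List (AA p m e)) (h : ∀ b ∈ L, Deg p m e d b) :
    Deg p m e d L.sum := by
  induction L with
  | nil => simpa using Deg_zero p m e d
  | cons b L ih =>
      rw [List.sum_cons]
      exact Deg_add p m e (h b (List.mem_cons_self))
        (ih (fun c hc => h c (List.mem_cons_of_mem b hc)))

lemma Deg_nilpotent {a : AA p m e} (ha : Deg p m e 1 a) : a ^ (e + 1) = 0 := by
  apply AA_eq_of_coeff
  intro l hl
  rw [Acoeff_zero]
  exact Deg_pow p m e ha (e + 1) l hl (by omega)

instance : CharP (AA p m e) p := by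
  constructor
  intro n
  rw [show ((n : ℕ) : AA p m e) = pr p m e ((n : ℕ) : RR p m) from (map_natCast _ n).symm]
  constructor
  · intro h
    have h0 : Acoeff p m e [] (Nat.zero_le e) (pr p m e ((n : ℕ) : RR p m)) = 0 := by
      rw [h, Acoeff_zero]
    rw [Acoeff_pr, MonoidAlgebra.natCast_def, coeffL_single, if_pos FreeMonoid.toList_one] at h0
    exact (ZMod.natCast_eq_zero_iff n p).mp h0
  · intro h
    have : ((n : ℕ) : ZMod p) = 0 := (ZMod.natCast_eq_zero_iff n p).mpr h
    rw [MonoidAlgebra.natCast_def, this]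
    rw [show (MonoidAlgebra.single (1 : FreeMonoid (Fin m)) (0 : ZMod p)) = 0 from
      MonoidAlgebra.single_zero _, map_zero]

def tT (j : Fin m) : AA p m e := pr p m e (MonoidAlgebra.single (FreeMonoid.of j) 1)

lemma Acoeff_tT (j : Fin m) (l : List (Fin m)) (hl : l.length ≤ e) :
    Acoeff p m e l hl (tT p m e j) = if [j] = l then 1 else 0 := by
  rw [tT, Acoeff_pr, coeffL_single, FreeMonoid.toList_of]

lemma Deg_tT (j : Fin m) : Deg p m e 1 (tT p m e j) := by
  intro l hl hlen
  rw [Acoeff_tT, if_neg]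
  intro h
  rw [← h] at hlen
  simp at hlen

lemma Acoeff_nil_mul (a b : AA p m e) :
    Acoeff p m e [] (Nat.zero_le e) (a * b) =
      Acoeff p m e [] (Nat.zero_le e) a * Acoeff p m e [] (Nat.zero_le e) b := by
  simpa using Acoeff_mul p m e [] (Nat.zero_le e) a b

def UU : Subgroup (AA p m e)ˣ where
  carrier := {u | Acoeff p m e [] (Nat.zero_le e) ((u : (AA p m e)ˣ) : AA p m e) = 1}
  one_mem' := by
    show Acoeff p m e [] (Nat.zero_le e) ((1 : (AA p m e)ˣ) : AA p m e) = 1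
    rw [Units.val_one, Acoeff_one, if_pos rfl]
  mul_mem' := by
    intro a b ha hb
    show Acoeff p m e [] (Nat.zero_le e) ((↑(a * b) : AA p m e)) = 1
    rw [Units.val_mul, Acoeff_nil_mul]
    rw [Set.mem_setOf_eq] at ha hb
    rw [ha, hb, mul_one]
  inv_mem' := by
    intro a ha
    rw [Set.mem_setOf_eq] at ha ⊢
    have h1 : ((a : (AA p m e)ˣ) : AA p m e) * ((a⁻¹ : (AA p m e)ˣ) : AA p m e) = 1 :=
      a.mul_inv
    have h2 := congrArg (Acoeff p m e [] (Nat.zero_le e)) h1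
    rw [Acoeff_nil_mul, ha, one_mul, Acoeff_one, if_pos rfl] at h2
    exact h2

instance (priority := high) listfin {m' e' : ℕ} : Finite {l : List (Fin m') // l.length ≤ e'} := by
  apply Finite.of_injective (fun l : {l : List (Fin m') // l.length ≤ e'} =>
    (fun i : Fin e' => l.1[i.1]?))
  intro l₁ l₂ h
  apply Subtype.ext
  apply List.ext_getElem?
  intro nn
  by_cases hn : nn < e'
  · exact congrFun h ⟨nn, hn⟩
  · rw [List.getElem?_eq_none_iff.mpr (le_trans l₁.2 (by omega)),
        List.getElem?_eq_none_iff.mpr (le_trans l₂.2 (by omega))]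

lemma finite_AA (hp : p ≠ 0) : Finite (AA p m e) := by
  haveI : NeZero p := ⟨hp⟩
  apply Finite.of_injective (fun a (l : {l : List (Fin m) // l.length ≤ e}) =>
    Acoeff p m e l.1 l.2 a)
  intro a b h
  exact AA_eq_of_coeff p m e a b (fun l hl => congrFun h ⟨l, hl⟩)

lemma finite_UU (hp : p ≠ 0) : Finite (UU p m e) := by
  haveI := finite_AA p m e hp
  exact Subtype.finite

lemma UU_pgroup (hp : p.Prime) : IsPGroup p (UU p m e) := by
  haveI : Fact p.Prime := ⟨hp⟩
  intro u
  refine ⟨e + 1, ?_⟩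
  set v : AA p m e := ((u : (AA p m e)ˣ) : AA p m e) with hv
  have hmem : Acoeff p m e [] (Nat.zero_le e) v = 1 := u.2
  set a : AA p m e := v - 1 with ha
  have hdeg : Deg p m e 1 a := by
    intro l hl hlen
    have hnil : l = [] := List.length_eq_zero_iff.mp (by omega)
    subst hnil
    rw [ha, Acoeff_sub, hmem, Acoeff_one, if_pos rfl, sub_self]
  have hnil : a ^ (e + 1) = 0 := Deg_nilpotent p m e hdeg
  have hvpow : v ^ (p ^ (e + 1)) = 1 := by
    have hcomm : Commute (1 : AA p m e) a := Commute.one_left a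
    have hbig : (1 + a) ^ (p ^ (e + 1)) = 1 ^ (p ^ (e + 1)) + a ^ (p ^ (e + 1)) :=
      add_pow_char_pow_of_commute _ _ hcomm
    have h1a : v = 1 + a := by rw [ha]; abel
    have hzero : a ^ (p ^ (e + 1)) = 0 := by
      have hle : e + 1 ≤ p ^ (e + 1) :=
        le_of_lt (Nat.lt_pow_self (n := e + 1) hp.one_lt)
      rw [show p ^ (e + 1) = (e + 1) + (p ^ (e + 1) - (e + 1)) by omega, pow_add,
        hnil, zero_mul]
    rw [h1a, hbig, hzero, one_pow, add_zero]
  have hu : ((u : (AA p m e)ˣ) ^ (p ^ (e + 1)) : (AA p m e)ˣ) = 1 := by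
    apply Units.ext
    rw [Units.val_pow_eq_pow_val, Units.val_one]
    exact hvpow
  apply Subtype.ext
  rw [SubmonoidClass.coe_pow, OneMemClass.coe_one]
  exact hu

lemma Acoeff_pow (he1 : 1 ≤ e) (a : AA p m e) (ha : Deg p m e 1 a) :
    ∀ (l : List (Fin m)) (hl : l.length ≤ e),
      Acoeff p m e l hl (a ^ l.length)
        = (l.map (fun j => Acoeff p m e [j] (by simpa using he1) a)).prod := by
  intro l
  induction l with
  | nil =>
      intro hl
      rw [show (([] : List (Fin m)).length) = 0 from rfl, pow_zero, Acoeff_one, if_pos rfl]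
      rfl
  | cons j t ih =>
      intro hl
      have hlt : t.length ≤ e := by
        have := hl; simp only [List.length_cons] at this; omega
      have hpow : a ^ ((j :: t).length) = a * a ^ t.length := by
        rw [List.length_cons, pow_succ']
      rw [hpow, Acoeff_mul]
      rw [Finset.sum_eq_single 1]
      · rw [List.map_cons, List.prod_cons]
        show Acoeff p m e [j] (by simpa using he1) a * Acoeff p m e t hlt (a ^ t.length) = _
        rw [ih hlt]
      · intro i hi hne
        rw [Finset.mem_range, List.length_cons] at hi
        rcases Nat.eq_zero_or_pos i with h0 | hpos
        · subst h0
          rw [ha ((j :: t).take 0) _ (by simp), zero_mul]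
        · have h2 : 2 ≤ i := by omega
          have hlen : ((j :: t).drop i).length < t.length := by
            rw [List.length_drop, List.length_cons]; omega
          rw [Deg_pow p m e ha t.length ((j :: t).drop i) _ (by omega), mul_zero]
      · intro hmem
        exfalso
        apply hmem
        rw [Finset.mem_range, List.length_cons]
        omega

lemma prod_one_add (he1 : 1 ≤ e) {ι : Type} (L : List ι) (β : ι → AA p m e)
    (hβ : ∀ i, Deg p m e e (β i)) :
    ∃ E, Deg p m e (e + 1) E ∧
      (L.map (fun i => 1 + β i)).prod = 1 + (L.map β).sum + E := by
  induction L with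
  | nil => exact ⟨0, Deg_zero p m e _, by simp⟩
  | cons i L ih =>
      obtain ⟨E, hE, hprod⟩ := ih
      refine ⟨E + β i * (L.map β).sum + β i * E, ?_, ?_⟩
      · have hS : Deg p m e e (L.map β).sum :=
          Deg_listSum p m e _ (by
            intro b hb
            obtain ⟨i', _, rfl⟩ := List.mem_map.mp hb
            exact hβ i')
        refine Deg_add p m e (Deg_add p m e hE ?_) ?_
        · exact Deg_mono p m e (by omega) (Deg_mul p m e (hβ i) hS)
        · exact Deg_mono p m e (by omega) (Deg_mul p m e (hβ i) hE)
      · rw [List.map_cons, List.prod_cons, hprod, List.map_cons, List.sum_cons]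
        noncomm_ring

def uElem (j : Fin m) : (AA p m e)ˣ :=
  (IsNilpotent.isUnit_one_add ⟨e + 1, Deg_nilpotent p m e (Deg_tT p m e j)⟩).unit

lemma uElem_val (j : Fin m) : ((uElem p m e j : (AA p m e)ˣ) : AA p m e) = 1 + tT p m e j :=
  IsUnit.unit_spec _

lemma uElem_mem (j : Fin m) : uElem p m e j ∈ UU p m e := by
  show Acoeff p m e [] (Nat.zero_le e) ((uElem p m e j : (AA p m e)ˣ) : AA p m e) = 1
  rw [uElem_val, Acoeff_add, Acoeff_one, if_pos rfl, Deg_tT p m e j [] (Nat.zero_le e) (by simp),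
    add_zero]

lemma Acoeff_listSum (l : List (Fin m)) (hl : l.length ≤ e) (L : List (AA p m e)) :
    Acoeff p m e l hl L.sum = (L.map (Acoeff p m e l hl)).sum := by
  induction L with
  | nil => simpa using Acoeff_zero p m e l hl
  | cons b L ih => rw [List.sum_cons, Acoeff_add, ih, List.map_cons, List.sum_cons]

lemma Acoeff_singleton_mul (he1 : 1 ≤ e) (j : Fin m) (a b : AA p m e) :
    Acoeff p m e [j] (by simpa using he1) (a * b)
      = Acoeff p m e [] (Nat.zero_le e) a * Acoeff p m e [j] (by simpa using he1) b
      + Acoeff p m e [j] (by simpa using he1) a * Acoeff p m e [] (Nat.zero_le e) b := by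
  rw [Acoeff_mul]
  show ∑ i ∈ Finset.range 2, _ = _
  rw [Finset.sum_range_succ, Finset.sum_range_one]
  rfl

end TruncAlg


open Finset Matrix in
lemma keyLA (p e n m : ℕ) (hp : p.Prime) (he2 : 2 ≤ e)
    (B : Fin n → (Fin m → ZMod p))
    (hspan : Submodule.span (ZMod p) (Set.range B) = ⊤)
    (hrel : ∀ w : Fin e → Fin m, ∑ i : Fin n, ∏ s : Fin e, B i (w s) = 0) :
    2 * m ≤ n := by
  haveI : Fact (Nat.Prime p) := ⟨hp⟩
  obtain ⟨e, rfl⟩ : ∃ e', e = e' + 1 := ⟨e - 1, by omega⟩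
  -- multilinear extension
  have hml : ∀ g : Fin (e+1) → (Fin m → (ZMod p)), ∑ i : Fin n, ∏ s : Fin (e+1), (B i ⬝ᵥ g s) = 0 := by
    intro g
    have expand : ∀ i : Fin n, (∏ s : Fin (e+1), (B i ⬝ᵥ g s))
        = ∑ w : Fin (e+1) → Fin m, (∏ s, B i (w s)) * ∏ s, g s (w s) := by
      intro i
      have : (∏ s : Fin (e+1), (B i ⬝ᵥ g s)) = ∏ s : Fin (e+1), ∑ j : Fin m, B i j * g s j := rfl
      rw [this, Finset.prod_univ_sum]
      rw [Fintype.piFinset_univ]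
      exact Finset.sum_congr rfl fun w _ => by rw [Finset.prod_mul_distrib]
    calc ∑ i : Fin n, ∏ s : Fin (e+1), (B i ⬝ᵥ g s)
        = ∑ i : Fin n, ∑ w : Fin (e+1) → Fin m, (∏ s, B i (w s)) * ∏ s, g s (w s) := by
          exact Finset.sum_congr rfl fun i _ => expand i
      _ = ∑ w : Fin (e+1) → Fin m, ∑ i : Fin n, (∏ s, B i (w s)) * ∏ s, g s (w s) :=
          Finset.sum_comm
      _ = ∑ w : Fin (e+1) → Fin m, (∑ i : Fin n, ∏ s, B i (w s)) * ∏ s, g s (w s) := by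
          exact Finset.sum_congr rfl fun w _ => (Finset.sum_mul ..).symm
      _ = 0 := by simp [hrel]
  -- extract a basis from the rows
  obtain ⟨b, hbsub, hbspan, hbind⟩ := exists_linearIndependent (ZMod p) (Set.range B)
  rw [hspan] at hbspan
  haveI : Fintype b := (Set.Finite.subset (Set.finite_range B) hbsub).fintype
  let bas : Module.Basis b (ZMod p) (Fin m → (ZMod p)) := Module.Basis.mk hbind (by rw [Subtype.range_val, hbspan])
  have hcard : Fintype.card b = m := by
    have := Module.finrank_eq_card_basis bas
    rw [Module.finrank_pi, Fintype.card_fin] at this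
    omega
  let ee : Fin m ≃ b := (Fintype.equivFinOfCardEq hcard).symm
  let wv : Fin m → (Fin m → (ZMod p)) := fun s => (ee s : Fin m → (ZMod p))
  have hwv : ∀ s, ∃ i, B i = wv s := fun s => hbsub (ee s).2
  choose idx hidx using hwv
  -- dual family
  let T : (Fin m → (ZMod p)) →ₗ[(ZMod p)] (Fin m → (ZMod p)) :=
    { toFun := fun u t => wv t ⬝ᵥ u
      map_add' := by intro u v; funext t; simp [dotProduct_add]
      map_smul' := by intro c u; funext t; simp [dotProduct_smul] }
  have hTinj : Function.Injective T := by
    rw [← LinearMap.ker_eq_bot, LinearMap.ker_eq_bot']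
    intro u hu
    have hall : ∀ z ∈ b, z ⬝ᵥ u = 0 := by
      intro z hz
      obtain ⟨t, ht⟩ := ee.surjective ⟨z, hz⟩
      have := congrFun hu t
      simpa [wv, ht, T] using this
    have hsub : (⊤ : Submodule (ZMod p) (Fin m → (ZMod p))) ≤
        { carrier := {z | z ⬝ᵥ u = 0}
          add_mem' := by intro a b ha hb; simp_all [add_dotProduct]
          zero_mem' := by simp
          smul_mem' := by intro c a ha; simp_all [smul_dotProduct] } := by
      rw [← hbspan]
      exact Submodule.span_le.2 (fun z hz => hall z hz)
    funext j
    have := hsub (Submodule.mem_top (x := Pi.single j 1))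
    simpa [single_dotProduct] using this
  have hTsurj : Function.Surjective T := (LinearMap.injective_iff_surjective).1 hTinj
  choose uu huu using fun t : Fin m => hTsurj (Pi.single t 1)
  have hdual : ∀ s t : Fin m, wv s ⬝ᵥ uu t = if s = t then 1 else 0 := by
    intro s t
    have := congrFun (huu t) s
    simpa [T, Pi.single_apply] using this
  -- the map M
  let M : (Fin n → (ZMod p)) →ₗ[(ZMod p)] (Fin m → (ZMod p)) :=
    { toFun := fun l => ∑ i : Fin n, l i • B i
      map_add' := by intro a b; simp [add_smul, Finset.sum_add_distrib]
      map_smul' := by intro c a; simp [smul_smul, Finset.smul_sum]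
      }
  have hMsurj : Function.Surjective M := by
    rw [← LinearMap.range_eq_top]
    rw [← top_le_iff, ← hspan]
    refine Submodule.span_le.2 ?_
    rintro z ⟨i, rfl⟩
    refine ⟨Pi.single i 1, ?_⟩
    simp [M, Pi.single_apply, ite_smul]
  -- the vectors c t
  let c : Fin m → (Fin n → ZMod p) := fun t i => (B i ⬝ᵥ uu t) ^ e
  have hcker : ∀ t, c t ∈ LinearMap.ker M := by
    intro t
    rw [LinearMap.mem_ker]
    funext j
    have key := hml (fun s : Fin (e+1) => if s = 0 then Pi.single j 1 else uu t)
    have hprod : ∀ i : Fin n,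
        (∏ s : Fin (e+1), (B i ⬝ᵥ if s = 0 then Pi.single j 1 else uu t))
        = B i j * (B i ⬝ᵥ uu t) ^ e := by
      intro i
      rw [Fin.prod_univ_succ]
      simp only [if_pos rfl]
      congr 1
      · simp [dotProduct_single]
      · rw [Finset.prod_congr rfl (fun s _ => by
          rw [if_neg (Fin.succ_ne_zero s)]), Finset.prod_const]
        simp
    rw [Finset.sum_congr rfl (fun i _ => hprod i)] at key
    have key2 : ∑ i : Fin n, (B i ⬝ᵥ uu t) ^ e * B i j = 0 := by
      rw [← key]; exact Finset.sum_congr rfl fun i _ => mul_comm _ _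
    simpa [M, c] using key2
  have hcind : LinearIndependent (ZMod p) c := by
    rw [Fintype.linearIndependent_iff]
    intro a ha s
    have hs := congrFun ha (idx s)
    simp only [Finset.sum_apply, Pi.smul_apply, smul_eq_mul, c, Pi.zero_apply] at hs
    have hz : ∀ t, a t * (B (idx s) ⬝ᵥ uu t) ^ e = if t = s then a s else 0 := by
      intro t
      rw [hidx s, hdual]
      by_cases h : t = s
      · subst h; simp
      · rw [if_neg (fun hh => h hh.symm), if_neg h, zero_pow (by omega : e ≠ 0)]
        ring
    rw [Finset.sum_congr rfl (fun t _ => hz t)] at hs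
    simpa using hs
  -- conclude
  let c' : Fin m → LinearMap.ker M := fun t => ⟨c t, hcker t⟩
  have hc'ind : LinearIndependent (ZMod p) c' := by
    have : c = (LinearMap.ker M).subtype ∘ c' := rfl
    exact LinearIndependent.of_comp (LinearMap.ker M).subtype (by rw [← this]; exact hcind)
  have h1 : m ≤ Module.finrank (ZMod p) (LinearMap.ker M) := by
    simpa using hc'ind.fintype_card_le_finrank
  have h2 := LinearMap.finrank_range_add_finrank_ker M
  rw [LinearMap.range_eq_top.2 hMsurj] at h2
  rw [Module.finrank_pi, Fintype.card_fin] at h2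
  have h3 : Module.finrank (ZMod p) (⊤ : Submodule (ZMod p) (Fin m → (ZMod p))) = m := by
    rw [finrank_top, Module.finrank_pi, Fintype.card_fin]
  omega

/-- The pro-`p` group `G = ⟨x₁,...,xₙ | x₁^e ⋯ xₙ^e = 1⟩` with `e = p^k`, `k ≥ 1`
(presented as `F/R` with `F` free pro-`p` on `x : Fin n → F` and `R` the closed
normal subgroup generated by the relator) admits no continuous surjection onto a
free pro-`p` group of rank `m > n/2`: any continuous homomorphism `φ : F → H` onto
a free pro-`p` group of rank `m` killing `R` (i.e. factoring through `G`) forces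
`2m ≤ n`, that is, `Ir_p(G) ≤ ⌊n/2⌋`. -/
theorem stmt17 (p k e n m : ℕ) (hp : p.Prime) (hk : 1 ≤ k) (he : e = p ^ k)
    (F : Type) [Group F] [TopologicalSpace F] [IsTopologicalGroup F]
    (x : Fin n → F) (hF : IsFreeProPOn p F x)
    (R : Subgroup F)
    (hR : R = (Subgroup.normalClosure
      {((List.finRange n).map (fun i => x i ^ e)).prod}).topologicalClosure)
    (H : Type) [Group H] [TopologicalSpace H] [IsTopologicalGroup H]
    (y : Fin m → H) (hH : IsFreeProPOn p H y)
    (φ : F →* H) (hφR : ∀ g ∈ R, φ g = 1)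
    (hφc : Continuous φ) (hφsurj : Function.Surjective φ) :
    2 * m ≤ n := by
  classical
  haveI factp : Fact p.Prime := ⟨hp⟩
  have hpne : p ≠ 0 := hp.ne_zero
  have he1 : 1 ≤ e := by rw [he]; exact Nat.one_le_pow k p hp.pos
  have he2 : 2 ≤ e := by
    rw [he]
    calc 2 ≤ p := hp.two_le
    _ = p ^ 1 := (pow_one p).symm
    _ ≤ p ^ k := Nat.pow_le_pow_right hp.pos hk
  -- set up the finite discrete p-group U
  letI tU : TopologicalSpace ↥(UU p m e) := ⊥
  haveI dU : DiscreteTopology ↥(UU p m e) := ⟨rfl⟩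
  haveI fU : Finite ↥(UU p m e) := finite_UU p m e hpne
  haveI tgU : IsTopologicalGroup ↥(UU p m e) :=
    { continuous_mul := continuous_of_discreteTopology
      continuous_inv := continuous_of_discreteTopology }
  have hUUpro : IsProP p ↥(UU p m e) := by
    refine ⟨inferInstance, inferInstance, inferInstance, ?_⟩
    intro U' _ _
    haveI : U'.FiniteIndex := ⟨Subgroup.index_ne_zero_of_finite⟩
    exact (UU_pgroup p m e hp).index U'
  obtain ⟨ψ, ⟨hψc, hψy⟩, -⟩ := hH.2 ↥(UU p m e) inferInstance inferInstance inferInstance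
    hUUpro (fun j => ⟨uElem p m e j, uElem_mem p m e j⟩)
  set ρ : F →* ↥(UU p m e) := ψ.comp φ with hρdef
  set μ : F →* AA p m e :=
    (Units.coeHom (AA p m e)).comp ((UU p m e).subtype.comp ρ) with hμdef
  set a : Fin n → AA p m e := fun i => μ (x i) with hadef
  have hmem1 : ∀ i, Acoeff p m e [] (Nat.zero_le e) (a i) = 1 := fun i => (ρ (x i)).2
  set α : Fin n → AA p m e := fun i => a i - 1 with hαdef
  have hαdeg : ∀ i, Deg p m e 1 (α i) := by
    intro i l hl hlen
    have hnil : l = [] := List.length_eq_zero_iff.mp (by omega)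
    subst hnil
    rw [hαdef]
    simp only
    rw [Acoeff_sub, hmem1 i, Acoeff_one, if_pos rfl, sub_self]
  set B : Fin n → Fin m → ZMod p :=
    fun i j => Acoeff p m e [j] (by simpa using he1) (α i) with hBdef
  -- the relator in AA
  have hrel0 : φ (((List.finRange n).map (fun i => x i ^ e)).prod) = 1 := by
    apply hφR
    rw [hR]
    exact Subgroup.le_topologicalClosure _
      (Subgroup.subset_normalClosure (Set.mem_singleton _))
  have hprodA : ((List.finRange n).map (fun i => (a i) ^ e)).prod = 1 := by
    have h1 : μ (((List.finRange n).map (fun i => x i ^ e)).prod) = 1 := by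
      rw [hμdef]
      simp only [MonoidHom.comp_apply]
      rw [hρdef]
      simp only [MonoidHom.comp_apply]
      rw [hrel0]
      simp
    rw [map_list_prod, List.map_map] at h1
    rw [← h1]
    congr 1
    apply List.map_congr_left
    intro i _
    simp [map_pow]
    rfl
  set β : Fin n → AA p m e := fun i => (α i) ^ e with hβdef
  have hβdeg : ∀ i, Deg p m e e (β i) := fun i => Deg_pow p m e (hαdeg i) e
  have hpowβ : ∀ i, (a i) ^ e = 1 + β i := by
    intro i
    have h1a : a i = 1 + α i := by rw [hαdef]; simp only; abel
    have hcomm : Commute (1 : AA p m e) (α i) := Commute.one_left _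
    have hfrob : (1 + α i) ^ (p ^ k) = 1 + (α i) ^ (p ^ k) := by
      rw [add_pow_char_pow_of_commute _ _ hcomm, one_pow]
    rw [← he] at hfrob
    rw [h1a, hfrob]
  obtain ⟨E, hE, hexp⟩ := prod_one_add p m e he1 (List.finRange n) β hβdeg
  have hsum0 : (((List.finRange n).map β).sum + E) = 0 := by
    have h2 : ((List.finRange n).map (fun i => 1 + β i)).prod = 1 := by
      have hmapeq : (List.finRange n).map (fun i => 1 + β i)
          = (List.finRange n).map (fun i => (a i) ^ e) :=
        List.map_congr_left (fun i _ => (hpowβ i).symm)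
      rw [hmapeq, hprodA]
    rw [hexp] at h2
    calc ((List.finRange n).map β).sum + E
        = 1 + ((List.finRange n).map β).sum + E - 1 := by abel
      _ = 1 - 1 := by rw [h2]
      _ = 0 := by abel
  -- coefficient extraction
  have hrelB : ∀ w : Fin e → Fin m, ∑ i : Fin n, ∏ s : Fin e, B i (w s) = 0 := by
    intro w
    set l : List (Fin m) := List.ofFn w with hldef
    have hlen : l.length = e := (List.length_ofFn : (List.ofFn w).length = e)
    have hl : l.length ≤ e := le_of_eq hlen
    have h0 : Acoeff p m e l hl (((List.finRange n).map β).sum + E) = 0 := by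
      rw [hsum0, Acoeff_zero]
    rw [Acoeff_add, hE l hl (by omega), add_zero, Acoeff_listSum, List.map_map] at h0
    have hterm : ∀ i : Fin n,
        (Acoeff p m e l hl ∘ β) i = ∏ s : Fin e, B i (w s) := by
      intro i
      have hexp2 : β i = (α i) ^ l.length := by rw [hβdef]; simp only; rw [hlen]
      show Acoeff p m e l hl (β i) = _
      rw [hexp2, Acoeff_pow p m e he1 (α i) (hαdeg i) l hl]
      rw [hldef, List.map_ofFn, List.prod_ofFn]
      rfl
    rw [List.map_congr_left (fun i _ => hterm i)] at h0
    rw [← Fin.sum_univ_def] at h0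
    exact h0
  -- spanning of the rows of B
  have hspan : Submodule.span (ZMod p) (Set.range B) = ⊤ := by
    set S : Submodule (ZMod p) (Fin m → ZMod p) := Submodule.span (ZMod p) (Set.range B)
      with hSdef
    haveI : NeZero p := ⟨hpne⟩
    letI tQ : TopologicalSpace (Multiplicative ((Fin m → ZMod p) ⧸ S)) := ⊥
    haveI dQ : DiscreteTopology (Multiplicative ((Fin m → ZMod p) ⧸ S)) := ⟨rfl⟩
    haveI fQ0 : Finite ((Fin m → ZMod p) ⧸ S) :=
      Finite.of_surjective _ (Submodule.mkQ_surjective S)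
    haveI fQ : Finite (Multiplicative ((Fin m → ZMod p) ⧸ S)) := fQ0
    haveI tgQ : IsTopologicalGroup (Multiplicative ((Fin m → ZMod p) ⧸ S)) :=
      { continuous_mul := continuous_of_discreteTopology
        continuous_inv := continuous_of_discreteTopology }
    have hQpgroup : IsPGroup p (Multiplicative ((Fin m → ZMod p) ⧸ S)) := by
      intro g
      refine ⟨1, ?_⟩
      apply Multiplicative.toAdd.injective
      rw [pow_one, toAdd_pow, toAdd_one]
      rw [← Nat.cast_smul_eq_nsmul (ZMod p), ZMod.natCast_self, zero_smul]
    have hQpro : IsProP p (Multiplicative ((Fin m → ZMod p) ⧸ S)) := by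
      refine ⟨inferInstance, inferInstance, inferInstance, ?_⟩
      intro U' _ _
      haveI : U'.FiniteIndex := ⟨Subgroup.index_ne_zero_of_finite⟩
      exact hQpgroup.index U'
    -- the homomorphism lam
    set lam : ↥(UU p m e) →* Multiplicative (Fin m → ZMod p) :=
      { toFun := fun u => Multiplicative.ofAdd
          (fun j => Acoeff p m e [j] (by simpa using he1)
            ((u : (AA p m e)ˣ) : AA p m e))
        map_one' := by
          show Multiplicative.ofAdd (fun j : Fin m => Acoeff p m e [j] (by simpa using he1)
              (((1 : ↥(UU p m e)) : (AA p m e)ˣ) : AA p m e)) = 1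
          have hz : (fun j : Fin m => Acoeff p m e [j] (by simpa using he1)
              (((1 : ↥(UU p m e)) : (AA p m e)ˣ) : AA p m e)) = fun _ => 0 := by
            funext j
            rw [OneMemClass.coe_one, Units.val_one, Acoeff_one, if_neg (by simp)]
          rw [hz]
          rfl
        map_mul' := by
          intro u v
          show Multiplicative.ofAdd _ = Multiplicative.ofAdd _ * Multiplicative.ofAdd _
          rw [← ofAdd_add]
          congr 1
          funext j
          show Acoeff p m e [j] (by simpa using he1)
              (((u : (AA p m e)ˣ) : AA p m e) * ((v : (AA p m e)ˣ) : AA p m e)) = _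
          rw [Acoeff_singleton_mul p m e he1 j]
          rw [u.2, v.2, one_mul, mul_one, Pi.add_apply]
          exact add_comm _ _ } with hlamdef
    set mkH : Multiplicative (Fin m → ZMod p) →*
        Multiplicative ((Fin m → ZMod p) ⧸ S) :=
      AddMonoidHom.toMultiplicative S.mkQ.toAddMonoidHom with hmkHdef
    set χ : F →* Multiplicative ((Fin m → ZMod p) ⧸ S) :=
      mkH.comp (lam.comp ρ) with hχdef
    have hχc : Continuous χ := by
      have h1 : Continuous (fun u : ↥(UU p m e) => mkH (lam u)) :=
        continuous_of_discreteTopology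
      have h2 : Continuous (fun g : F => ψ (φ g)) := hψc.comp hφc
      exact h1.comp h2
    have hχx : ∀ i, χ (x i) = 1 := by
      intro i
      have hcoefαa : ∀ j, B i j = Acoeff p m e [j] (by simpa using he1) (a i) := by
        intro j
        show Acoeff p m e [j] (by simpa using he1) (a i - 1) = _
        rw [Acoeff_sub, Acoeff_one, if_neg (by simp), sub_zero]
      have hlamval : lam (ρ (x i)) = Multiplicative.ofAdd (B i) := by
        show Multiplicative.ofAdd _ = _
        congr 1
        funext j
        exact (hcoefαa j).symm
      show mkH (lam (ρ (x i))) = 1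
      rw [hlamval]
      show Multiplicative.ofAdd (S.mkQ (B i)) = 1
      have hBiS : B i ∈ S := Submodule.subset_span ⟨i, rfl⟩
      rw [Submodule.mkQ_apply, (Submodule.Quotient.mk_eq_zero S).mpr hBiS]
      rfl
    obtain ⟨φ₀, -, huniq⟩ := hF.2 (Multiplicative ((Fin m → ZMod p) ⧸ S))
      inferInstance inferInstance inferInstance hQpro (fun _ => 1)
    have hχ0 : χ = φ₀ := huniq χ ⟨hχc, hχx⟩
    have h10 : (1 : F →* Multiplicative ((Fin m → ZMod p) ⧸ S)) = φ₀ :=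
      huniq 1 ⟨continuous_const, fun _ => rfl⟩
    have hχ1 : χ = 1 := hχ0.trans h10.symm
    -- evaluate at preimages of the y j
    have hsingle : ∀ j : Fin m, Pi.single j (1 : ZMod p) ∈ S := by
      intro j
      obtain ⟨f, hf⟩ := hφsurj (y j)
      have h1 : χ f = 1 := by rw [hχ1]; rfl
      have h2 : χ f = Multiplicative.ofAdd (S.mkQ (Pi.single j 1)) := by
        show mkH (lam (ψ (φ f))) = _
        rw [hf, hψy j]
        have hlam2 : lam ⟨uElem p m e j, uElem_mem p m e j⟩
            = Multiplicative.ofAdd (Pi.single j (1 : ZMod p)) := by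
          have hfun : (fun j' : Fin m => Acoeff p m e [j'] (by simpa using he1)
              ((uElem p m e j : (AA p m e)ˣ) : AA p m e))
              = (Pi.single j (1 : ZMod p) : Fin m → ZMod p) := by
            funext j'
            rw [uElem_val, Acoeff_add, Acoeff_one, if_neg (by simp), Acoeff_tT, zero_add,
              Pi.single_apply]
            by_cases h : j = j'
            · rw [if_pos (by rw [h]), if_pos h.symm]
            · rw [if_neg (by simpa using h), if_neg (fun hh => h hh.symm)]
          show Multiplicative.ofAdd (fun j' : Fin m => Acoeff p m e [j'] (by simpa using he1)
              ((uElem p m e j : (AA p m e)ˣ) : AA p m e)) = _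
          rw [hfun]
        rw [hlam2]
        rfl
      rw [h1] at h2
      have h3 : S.mkQ (Pi.single j 1) = 0 := by
        have := h2.symm
        rwa [show (1 : Multiplicative ((Fin m → ZMod p) ⧸ S))
          = Multiplicative.ofAdd 0 from rfl, Multiplicative.ofAdd.apply_eq_iff_eq] at this
      exact (Submodule.Quotient.mk_eq_zero S).mp (by rwa [Submodule.mkQ_apply] at h3)
    rw [eq_top_iff]
    intro v _
    have hv : v = ∑ j : Fin m, Pi.single j (v j) := (Finset.univ_sum_single v).symm
    rw [hv]
    apply Submodule.sum_mem
    intro j _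
    have : (Pi.single j (v j) : Fin m → ZMod p)
        = v j • (Pi.single j (1 : ZMod p) : Fin m → ZMod p) := by
      funext j'
      rw [Pi.smul_apply, Pi.single_apply, Pi.single_apply, smul_eq_mul]
      by_cases h : j' = j
      · rw [if_pos h, if_pos h, mul_one]
      · rw [if_neg h, if_neg h, mul_zero]
    rw [this]
    exact Submodule.smul_mem S _ (hsingle j)
  exact keyLA p e n m hp he2 B hspan hrelB
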